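/- For the inviscid Burgers' equation with smooth initial data u₀ whose derivative attains a negative value, any C¹ solution must break down (cease to exist as a C¹ function) at or before time T* = -1/min_x u₀'(x). -/

import Mathlib

open Set

/-- Constancy of a Burgers solution along characteristics. -/
lemma burgers_characteristic (T : ℝ) (hT : 0 < T) (u : ℝ → ℝ → ℝ)
    (hu : ContDiff ℝ 1 (fun p : ℝ × ℝ => u p.1 p.2))
    (hpde : ∀ x : ℝ, ∀ t ∈ Set.Icc (0 : ℝ) T,
      deriv (fun s => u x s) t + u x t * deriv (fun y => u y t) x = 0)
    (x₀ : ℝ) :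
    ∀ t ∈ Set.Icc (0 : ℝ) T, u (x₀ + t * u x₀ 0) t = u x₀ 0 := by
  set F : ℝ × ℝ → ℝ := fun p => u p.1 p.2 with hFdef
  have hFd : Differentiable ℝ F := hu.differentiable one_ne_zero
  have hx : ∀ x t : ℝ, HasDerivAt (fun y => u y t) (fderiv ℝ F (x, t) (1, 0)) x := by
    intro x t
    have h1 : HasDerivAt (fun y : ℝ => (y, t)) ((1 : ℝ), (0 : ℝ)) x :=
      (hasDerivAt_id x).prodMk (hasDerivAt_const x t)
    exact (hFd (x, t)).hasFDerivAt.comp_hasDerivAt x h1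
  have hts : ∀ x t : ℝ, HasDerivAt (fun s => u x s) (fderiv ℝ F (x, t) (0, 1)) t := by
    intro x t
    have h1 : HasDerivAt (fun s : ℝ => (x, s)) ((0 : ℝ), (1 : ℝ)) t :=
      (hasDerivAt_const t x).prodMk (hasDerivAt_id t)
    exact (hFd (x, t)).hasFDerivAt.comp_hasDerivAt t h1
  have hpde' : ∀ x t : ℝ, t ∈ Set.Icc (0 : ℝ) T →
      fderiv ℝ F (x, t) (0, 1) = -(u x t * fderiv ℝ F (x, t) (1, 0)) := by
    intro x t htm
    have h := hpde x t htm
    rw [(hts x t).deriv, (hx x t).deriv] at h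
    linarith
  set c : ℝ := u x₀ 0 with hc
  set g : ℝ → ℝ := fun t => u (x₀ + t * c) t with hg
  -- chain rule: derivative of g
  have hgd : ∀ t : ℝ, HasDerivAt g
      (c * fderiv ℝ F (x₀ + t * c, t) (1, 0) + fderiv ℝ F (x₀ + t * c, t) (0, 1)) t := by
    intro t
    have h1 : HasDerivAt (fun s : ℝ => (x₀ + s * c, s)) ((c : ℝ), (1 : ℝ)) t := by
      have : HasDerivAt (fun s : ℝ => x₀ + s * c) c t := by
        simpa using ((hasDerivAt_id t).mul_const c).const_add x₀
      exact this.prodMk (hasDerivAt_id t)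
    have h2 : HasDerivAt
        ((fun p : ℝ × ℝ => u p.1 p.2) ∘ (fun s : ℝ => (x₀ + s * c, s)))
        (fderiv ℝ F (x₀ + t * c, t) ((c : ℝ), (1 : ℝ))) t :=
      HasFDerivAt.comp_hasDerivAt_of_eq (l := fun p : ℝ × ℝ => u p.1 p.2)
        (f := fun s : ℝ => (x₀ + s * c, s)) t (hFd (x₀ + t * c, t)).hasFDerivAt h1 rfl
    have h3 : ((c : ℝ), (1 : ℝ)) = c • ((1 : ℝ), (0 : ℝ)) + ((0 : ℝ), (1 : ℝ)) := by
      simp [Prod.ext_iff]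
    rw [h3, map_add, map_smul, smul_eq_mul] at h2
    exact h2
  -- the time-clamped coefficient
  set proj : ℝ → ℝ := fun t => max 0 (min t T) with hproj
  have hprojmem : ∀ t : ℝ, proj t ∈ Set.Icc (0 : ℝ) T := by
    intro t
    constructor
    · exact le_max_left _ _
    · exact max_le (le_of_lt hT) (min_le_right _ _)
  have hprojeq : ∀ t ∈ Set.Icc (0 : ℝ) T, proj t = t := by
    intro t ht
    simp [hproj, min_eq_left ht.2, max_eq_right ht.1]
  set A : ℝ → ℝ := fun t => fderiv ℝ F (x₀ + proj t * c, proj t) (1, 0) with hA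
  have hAcont : Continuous A := by
    have h1 : Continuous fun p : ℝ × ℝ => fderiv ℝ F p (1, 0) := by
      have := (hu.fderiv_right (m := 0) le_rfl).continuous
      exact (ContinuousLinearMap.apply ℝ ℝ ((1 : ℝ), (0 : ℝ))).continuous.comp this
    have h2 : Continuous proj := continuous_const.max (continuous_id.min continuous_const)
    exact h1.comp ((continuous_const.add (h2.mul continuous_const)).prodMk h2)
  obtain ⟨C, hC⟩ : ∃ C : ℝ, ∀ t : ℝ, |A t| ≤ C := by
    obtain ⟨C, hC⟩ := (isCompact_Icc (a := (0:ℝ)) (b := T)).exists_bound_of_continuousOn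
      (hAcont.continuousOn)
    refine ⟨C, fun t => ?_⟩
    have h1 : proj (proj t) = proj t := hprojeq _ (hprojmem t)
    have := hC (proj t) (hprojmem t)
    simpa [hA, h1] using this
  set v : ℝ → ℝ → ℝ := fun t y => (c - y) * A t with hv
  have hlip : ∀ t : ℝ, LipschitzWith (Real.toNNReal C) (v t) := by
    intro t
    refine LipschitzWith.of_dist_le_mul fun y z => ?_
    have h1 : v t y - v t z = (z - y) * A t := by ring
    rw [Real.dist_eq, Real.dist_eq, h1, abs_mul]
    have h2 : |A t| ≤ (Real.toNNReal C : ℝ) := (hC t).trans (Real.le_coe_toNNReal C)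
    calc |z - y| * |A t| ≤ |z - y| * (Real.toNNReal C : ℝ) :=
          mul_le_mul_of_nonneg_left h2 (abs_nonneg _)
      _ = (Real.toNNReal C : ℝ) * |y - z| := by rw [abs_sub_comm]; ring
  have hgc : Continuous g := by
    have : Continuous fun t : ℝ => ((x₀ + t * c : ℝ), t) :=
      (continuous_const.add (continuous_id.mul continuous_const)).prodMk continuous_id
    exact hu.continuous.comp this
  have huniq := ODE_solution_unique_of_mem_Icc_right (v := v) (s := fun _ => Set.univ)
    (K := Real.toNNReal C) (f := g) (g := fun _ => c) (a := 0) (b := T)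
    (fun t _ => (hlip t).lipschitzOnWith)
    hgc.continuousOn
    (fun t ht => by
      have htm : t ∈ Set.Icc (0 : ℝ) T := Set.Ico_subset_Icc_self ht
      have hstep := hgd t
      have hAe : A t = fderiv ℝ F (x₀ + t * c, t) (1, 0) := by
        simp [hA, hprojeq t htm]
      have heq : c * fderiv ℝ F (x₀ + t * c, t) (1, 0) + fderiv ℝ F (x₀ + t * c, t) (0, 1)
          = v t (g t) := by
        rw [hpde' (x₀ + t * c) t htm, hv]
        simp only [hg]
        rw [hAe]; ring
      rw [heq] at hstep
      exact hstep.hasDerivWithinAt)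
    (fun t _ => trivial)
    continuousOn_const
    (fun t ht => by
      have : v t c = 0 := by simp [hv]
      rw [this]
      exact (hasDerivAt_const t c).hasDerivWithinAt)
    (fun t _ => trivial)
    (by simp [hg, hc])
  intro t ht
  exact huniq ht

/-- Finite-time breakdown for the inviscid Burgers' equation: if the initial
derivative has infimum `-m < 0` which is attained, then any `C¹` solution on
`ℝ × [0, T]` satisfies `T ≤ 1/m`. -/
theorem burgers_blowup_time (u₀ : ℝ → ℝ) (hu₀ : ContDiff ℝ 1 u₀)
    (m : ℝ) (hm : 0 < m)
    (hinf : ∀ x, -m ≤ deriv u₀ x)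
    (hatt : ∃ x, deriv u₀ x = -m)
    (T : ℝ) (hT : 0 < T) (u : ℝ → ℝ → ℝ)
    (hu : ContDiff ℝ 1 (fun p : ℝ × ℝ => u p.1 p.2))
    (hpde : ∀ x : ℝ, ∀ t ∈ Set.Icc (0 : ℝ) T,
      deriv (fun s => u x s) t + u x t * deriv (fun y => u y t) x = 0)
    (hinit : ∀ x, u x 0 = u₀ x) :
    T ≤ 1 / m := by
  by_contra hTle
  push_neg at hTle
  obtain ⟨x₀, hx₀⟩ := hatt
  have hd : HasDerivAt u₀ (-m) x₀ := by
    have := (hu₀.differentiable one_ne_zero x₀).hasDerivAt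
    rwa [hx₀] at this
  -- find a nearby point with steep enough secant slope
  have hslope := hasDerivAt_iff_tendsto_slope.mp hd
  have hmT : (1 : ℝ) / T < m := by
    rw [div_lt_iff₀ hm] at hTle
    rw [div_lt_iff₀ hT]
    linarith
  have hev : ∀ᶠ x in nhdsWithin x₀ {x₀}ᶜ, slope u₀ x₀ x < -(1 / T) := by
    have : Set.Iio (-(1/T)) ∈ nhds (-m) := Iio_mem_nhds (by linarith)
    exact hslope this
  have hev' : ∀ᶠ x in nhdsWithin x₀ (Set.Ioi x₀), slope u₀ x₀ x < -(1 / T) :=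
    hev.filter_mono (nhdsWithin_mono x₀ (fun x hx => ne_of_gt hx))
  obtain ⟨x₂, hx₂lt, hx₂⟩ : ∃ x₂, slope u₀ x₀ x₂ < -(1/T) ∧ x₀ < x₂ := by
    obtain ⟨x₂, h1, h2⟩ := (hev'.and (eventually_mem_nhdsWithin)).exists
    exact ⟨x₂, h1, h2⟩
  set c₁ : ℝ := u₀ x₀ with hc₁
  set c₂ : ℝ := u₀ x₂ with hc₂
  have hxx : 0 < x₂ - x₀ := by linarith
  have hslope' : (c₂ - c₁) / (x₂ - x₀) < -(1/T) := by
    have : slope u₀ x₀ x₂ = (c₂ - c₁) / (x₂ - x₀) := by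
      rw [slope_def_field]
    rwa [this] at hx₂lt
  have hcc : (x₂ - x₀) / T < c₁ - c₂ := by
    rw [div_lt_iff₀ hxx] at hslope'
    have h4 : -(1 / T) * (x₂ - x₀) = -((x₂ - x₀) / T) := by ring
    rw [h4] at hslope'
    linarith
  have hccpos : 0 < c₁ - c₂ := lt_trans (div_pos hxx hT) hcc
  set t₀ : ℝ := (x₂ - x₀) / (c₁ - c₂) with ht₀
  have ht₀pos : 0 < t₀ := div_pos hxx hccpos
  have ht₀T : t₀ < T := by
    rw [ht₀, div_lt_iff₀ hccpos]
    rw [div_lt_iff₀ hT] at hcc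
    linarith
  have ht₀mem : t₀ ∈ Set.Icc (0 : ℝ) T := ⟨le_of_lt ht₀pos, le_of_lt ht₀T⟩
  have key := burgers_characteristic T hT u hu hpde
  have h1 : u (x₀ + t₀ * u x₀ 0) t₀ = u x₀ 0 := key x₀ t₀ ht₀mem
  have h2 : u (x₂ + t₀ * u x₂ 0) t₀ = u x₂ 0 := key x₂ t₀ ht₀mem
  rw [hinit x₀] at h1
  rw [hinit x₂] at h2
  have hcross : x₀ + t₀ * c₁ = x₂ + t₀ * c₂ := by
    have : t₀ * (c₁ - c₂) = x₂ - x₀ := by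
      rw [ht₀]; field_simp
    linarith [this]
  rw [hcross] at h1
  rw [h1] at h2
  exact absurd h2.symm (by intro h; rw [← hc₁, ← hc₂] at h; linarith)
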